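/- For real numbers l_1,...,l_K with order statistics l_{(1)} ≤ ... ≤ l_{(K)}, and any integer h with 1 ≤ h < K, the LogSumExp function satisfies l_{(K)} ≤ log(∑_{k=1}^K exp(l_k)) ≤ l_{(K)} + log h + exp(l_{(K-h)} - l_{(K)})·(K-h)/h. -/

import Mathlib

open Finset Real

/-- LogSumExp bounds: for sorted values `m` (a rearrangement of `l`) and `1 ≤ h < K`,
`l_{(K)} ≤ log ∑ exp l_k ≤ l_{(K)} + log h + exp(l_{(K-h)} - l_{(K)})·(K-h)/h`. -/
theorem lse_bounds (K h : ℕ) (hK : 2 ≤ K) (hh : 1 ≤ h) (hhK : h < K)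
    (l m : Fin K → ℝ) (σ : Equiv.Perm (Fin K)) (hperm : l = m ∘ σ)
    (hmono : Monotone m) :
    m ⟨K - 1, by omega⟩ ≤ Real.log (∑ k, Real.exp (l k)) ∧
    Real.log (∑ k, Real.exp (l k)) ≤
      m ⟨K - 1, by omega⟩ + Real.log h +
        Real.exp (m ⟨K - h - 1, by omega⟩ - m ⟨K - 1, by omega⟩) * (K - h) / h := by
  have hsum : ∑ k, Real.exp (l k) = ∑ k, Real.exp (m k) := by
    rw [hperm]
    exact Equiv.sum_comp σ (fun k => Real.exp (m k))
  set M := m ⟨K - 1, by omega⟩ with hM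
  set m' := m ⟨K - h - 1, by omega⟩ with hm'
  set x := Real.exp (m' - M) * (K - h) / h with hx
  have hpos : (0:ℝ) < ∑ k, Real.exp (l k) := by
    rw [hsum]
    exact Finset.sum_pos (fun i _ => Real.exp_pos _) ⟨⟨0, by omega⟩, Finset.mem_univ _⟩
  have hh0 : (0:ℝ) < (h:ℝ) := by exact_mod_cast hh
  constructor
  · rw [Real.le_log_iff_exp_le hpos, hsum]
    exact Finset.single_le_sum (f := fun k => Real.exp (m k)) (fun i _ => (Real.exp_pos _).le) (Finset.mem_univ (⟨K - 1, by omega⟩ : Fin K))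
  · rw [Real.log_le_iff_le_exp hpos, hsum]
    have hbound : ∑ k, Real.exp (m k) ≤ h * Real.exp M + (K - h) * Real.exp m' := by
      have hle : ∑ k : Fin K, Real.exp (m k)
          ≤ ∑ k : Fin K, (if (⟨K - h, by omega⟩ : Fin K) ≤ k then Real.exp M else Real.exp m') := by
        apply Finset.sum_le_sum
        intro i _
        split_ifs with hi
        · exact Real.exp_le_exp.2 (hmono (by simp only [Fin.le_def]; omega))
        · exact Real.exp_le_exp.2 (hmono (by simp only [Fin.le_def] at hi ⊢; omega))
      refine hle.trans_eq ?_
      rw [Finset.sum_ite, Finset.sum_const, Finset.sum_const]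
      have h1 : Finset.filter (fun k => (⟨K - h, by omega⟩ : Fin K) ≤ k) Finset.univ
          = Finset.Ici (⟨K - h, by omega⟩ : Fin K) := by ext y; simp
      have h2 : Finset.filter (fun k => ¬ (⟨K - h, by omega⟩ : Fin K) ≤ k) Finset.univ
          = Finset.Iio (⟨K - h, by omega⟩ : Fin K) := by ext y; simp [not_le]
      rw [h1, h2, Fin.card_Ici, Fin.card_Iio]
      simp only [nsmul_eq_mul]
      have hc : K - (K - h) = h := by omega
      rw [hc]
      rw [Nat.cast_sub hhK.le]
    have key : (h:ℝ) * Real.exp M + ((K:ℝ) - h) * Real.exp m'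
        = h * Real.exp M * (1 + x) := by
      rw [hx, Real.exp_sub]
      field_simp
    have hfin : (h:ℝ) * Real.exp M * (1 + x) ≤ Real.exp (M + Real.log h + x) := by
      have h1x : 1 + x ≤ Real.exp x := by
        have := Real.add_one_le_exp x; linarith
      calc (h:ℝ) * Real.exp M * (1 + x) ≤ h * Real.exp M * Real.exp x := by
            apply mul_le_mul_of_nonneg_left h1x; positivity
        _ = Real.exp (M + Real.log h + x) := by
            rw [Real.exp_add, Real.exp_add, Real.exp_log hh0]; ring
    calc ∑ k, Real.exp (m k) ≤ h * Real.exp M + ((K:ℝ) - h) * Real.exp m' := hbound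
      _ = h * Real.exp M * (1 + x) := key
      _ ≤ Real.exp (M + Real.log h + x) := hfin
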